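/- arXiv:2211.15981 — 7 statements merged into one kernel-verified Lean document; each statement's English description precedes it below -/
import Mathlib

section
/- Let (R, pR) be a discrete valuation domain with valuation v, f = ∏_{g∈P} g^{m_g} ∈ R[x] a primitive non-constant polynomial with irreducible divisor set P, multiplicities m_g ≥ 1, and v(d(f)) = n. Let W be a set of representatives of the witness set W(f) = {a : v(f(a)) = n} modulo p^{⌈n/2⌉}R. Then for each a ∈ W(f) there exists w ∈ W such that v(g(a)) = v(g(w)) for all g ∈ P. -/
open Polynomial IsDiscreteValuationRing

private lemma addVal_finprod {R : Type*} [CommRing R] [IsDomain R]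
    [IsDiscreteValuationRing R] {ι : Type*} (s : Finset ι) (x : ι → R) :
    addVal R (∏ i ∈ s, x i) = ∑ i ∈ s, addVal R (x i) := by
  classical
  induction s using Finset.cons_induction with
  | empty => simp [addVal_one]
  | cons a s ha ih => rw [Finset.prod_cons, Finset.sum_cons, addVal_mul, ih]

private lemma aux_sum {ι : Type*} (P : Finset ι) (m A B : ι → ℕ) (n k : ℕ)
    (hn : n ≤ 2 * k)
    (hm : ∀ g ∈ P, 1 ≤ m g)
    (hSA : ∑ g ∈ P, m g * A g = n)
    (hSB : ∑ g ∈ P, m g * B g = n)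
    (hbound : ∀ g ∈ P, A g < B g → k ≤ A g)
    (hbound' : ∀ g ∈ P, B g < A g → k ≤ B g)
    (g0 : ι) (hg0 : g0 ∈ P) (hlt : A g0 < B g0) : False := by
  classical
  have hk0 : k ≤ A g0 := hbound g0 hg0 hlt
  rw [← Finset.add_sum_erase _ _ hg0] at hSA hSB
  -- find h with B h < A h
  have hex : ∃ h ∈ P.erase g0, B h < A h := by
    by_contra hc
    push_neg at hc
    have h1 : m g0 * A g0 < m g0 * B g0 :=
      Nat.mul_lt_mul_of_pos_left hlt (hm g0 hg0)
    have h2 : ∑ g ∈ P.erase g0, m g * A g ≤ ∑ g ∈ P.erase g0, m g * B g :=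
      Finset.sum_le_sum fun h hh => Nat.mul_le_mul_left (m h) (hc h hh)
    omega
  obtain ⟨h, hhP, hBA⟩ := hex
  have hhP' : h ∈ P := Finset.mem_of_mem_erase hhP
  have hkB : k ≤ B h := hbound' h hhP' hBA
  have hkA : k + 1 ≤ A h := by omega
  have h3 : m h * A h ≤ ∑ g ∈ P.erase g0, m g * A g :=
    Finset.single_le_sum (f := fun g => m g * A g) (fun i _ => Nat.zero_le _) hhP
  have h4 : k + 1 ≤ m h * A h :=
    le_trans hkA (Nat.le_mul_of_pos_left _ (hm h hhP'))
  have h5 : k ≤ m g0 * A g0 :=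
    le_trans hk0 (Nat.le_mul_of_pos_left _ (hm g0 hg0))
  omega

theorem stmt_7 (R : Type*) [CommRing R] [IsDomain R] [IsDiscreteValuationRing R]
    [Finite (R ⧸ IsLocalRing.maximalIdeal R)]
    (P : Finset (Polynomial R)) (hPne : P.Nonempty)
    (hirr : ∀ g ∈ P, Irreducible g)
    (hassoc : ∀ g ∈ P, ∀ h ∈ P, g ≠ h → ¬ Associated g h)
    (m : Polynomial R → ℕ) (hm : ∀ g ∈ P, 1 ≤ m g)
    (f : Polynomial R) (hf : f = ∏ g ∈ P, g ^ (m g))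
    (hprim : f.IsPrimitive) (hdeg : 0 < f.natDegree) (n : ℕ)
    (hge : ∀ a : R, (n : ℕ∞) ≤ addVal R (f.eval a))
    (hwit : ∃ a : R, addVal R (f.eval a) = n)
    (W : Set R)
    (hWsub : ∀ w ∈ W, addVal R (f.eval w) = n)
    (hWrep : ∀ a : R, addVal R (f.eval a) = n →
      ∃ w ∈ W, ((((n + 1) / 2 : ℕ)) : ℕ∞) ≤ addVal R (a - w)) :
    ∀ a : R, addVal R (f.eval a) = n →
      ∃ w ∈ W, ∀ g ∈ P, addVal R (g.eval a) = addVal R (g.eval w) := by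
  classical
  intro a ha
  obtain ⟨w, hwW, hdist⟩ := hWrep a ha
  refine ⟨w, hwW, ?_⟩
  set k : ℕ := (n + 1) / 2 with hk
  have hwn : addVal R (f.eval w) = n := hWsub w hwW
  have heval : ∀ x : R, f.eval x = ∏ g ∈ P, (g.eval x) ^ (m g) := by
    intro x
    rw [hf, eval_prod]
    exact Finset.prod_congr rfl fun g _ => by rw [eval_pow]
  have hvprod : ∀ x : R,
      addVal R (f.eval x) = ∑ g ∈ P, (m g : ℕ∞) * addVal R (g.eval x) := by
    intro x
    rw [heval x, addVal_finprod]
    exact Finset.sum_congr rfl fun g _ => by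
      rw [addVal_pow, nsmul_eq_mul]
  -- nonvanishing of factors
  have hne : ∀ x : R, addVal R (f.eval x) = n →
      ∀ g ∈ P, addVal R (g.eval x) ≠ ⊤ := by
    intro x hx g hg
    have hfx : f.eval x ≠ 0 := by
      intro h0
      rw [h0, addVal_zero] at hx
      exact (ENat.top_ne_coe n) hx
    have : (g.eval x) ^ (m g) ≠ 0 := by
      intro h0
      apply hfx
      rw [heval x]
      exact Finset.prod_eq_zero hg h0
    have hgx : g.eval x ≠ 0 := fun h0 => this (by rw [h0, zero_pow (Nat.one_le_iff_ne_zero.mp (hm g hg))])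
    rw [Ne, addVal_eq_top_iff]
    exact hgx
  have hnea := hne a ha
  have hnew := hne w hwn
  -- natural valued valuations
  set A : Polynomial R → ℕ := fun g => (addVal R (g.eval a)).toNat with hA
  set B : Polynomial R → ℕ := fun g => (addVal R (g.eval w)).toNat with hB
  have hAc : ∀ g ∈ P, (A g : ℕ∞) = addVal R (g.eval a) := fun g hg =>
    ENat.coe_toNat (hnea g hg)
  have hBc : ∀ g ∈ P, (B g : ℕ∞) = addVal R (g.eval w) := fun g hg =>
    ENat.coe_toNat (hnew g hg)
  have hsum : ∀ (x : R) (C : Polynomial R → ℕ),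
      (∀ g ∈ P, (C g : ℕ∞) = addVal R (g.eval x)) →
      addVal R (f.eval x) = n → ∑ g ∈ P, m g * C g = n := by
    intro x C hC hx
    have : ((∑ g ∈ P, m g * C g : ℕ) : ℕ∞) = (n : ℕ∞) := by
      push_cast
      rw [← hx, hvprod x]
      exact Finset.sum_congr rfl fun g hg => by rw [hC g hg]
    exact_mod_cast this
  have hSA : ∑ g ∈ P, m g * A g = n := hsum a A hAc ha
  have hSB : ∑ g ∈ P, m g * B g = n := hsum w B hBc hwn
  -- the key valuation bound
  have hkey : ∀ x y : R, (k : ℕ∞) ≤ addVal R (x - y) → ∀ g ∈ P,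
      addVal R (g.eval x) < addVal R (g.eval y) →
      (k : ℕ∞) ≤ addVal R (g.eval x) := by
    intro x y hxy g _ hlt
    have hdvd : (x - y) ∣ (g.eval x - g.eval y) := sub_dvd_eval_sub x y g
    have hdiff : (k : ℕ∞) ≤ addVal R (g.eval x - g.eval y) :=
      le_trans hxy (addVal_le_iff_dvd.mpr hdvd)
    have hmin : min (addVal R (g.eval x - g.eval y)) (addVal R (g.eval y)) ≤
        addVal R (g.eval x) := by
      have h := addVal_add (a := g.eval x - g.eval y) (b := g.eval y)
      rwa [sub_add_cancel] at h
    rcases le_total (addVal R (g.eval x - g.eval y)) (addVal R (g.eval y)) with h | h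
    · rw [min_eq_left h] at hmin
      exact le_trans hdiff hmin
    · rw [min_eq_right h] at hmin
      exact absurd hmin (not_le_of_gt hlt)
  have hdist' : (k : ℕ∞) ≤ addVal R (w - a) := by
    have heq : addVal R (a - w) = addVal R (w - a) :=
      le_antisymm (addVal_le_iff_dvd.mpr (dvd_sub_comm.mp dvd_rfl))
        (addVal_le_iff_dvd.mpr (dvd_sub_comm.mp dvd_rfl))
    rwa [heq] at hdist
  -- conclude
  intro g hg
  by_contra hne'
  have hABne : A g ≠ B g := by
    intro hEq
    apply hne'
    rw [← hAc g hg, ← hBc g hg, hEq]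
  have hn2k : n ≤ 2 * k := by omega
  have hbound : ∀ g ∈ P, A g < B g → k ≤ A g := by
    intro g' hg' hlt
    have hlt' : addVal R (g'.eval a) < addVal R (g'.eval w) := by
      rw [← hAc g' hg', ← hBc g' hg']
      exact_mod_cast hlt
    have := hkey a w hdist g' hg' hlt'
    rw [← hAc g' hg'] at this
    exact_mod_cast this
  have hbound' : ∀ g ∈ P, B g < A g → k ≤ B g := by
    intro g' hg' hlt
    have hlt' : addVal R (g'.eval w) < addVal R (g'.eval a) := by
      rw [← hAc g' hg', ← hBc g' hg']
      exact_mod_cast hlt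
    have := hkey w a hdist' g' hg' hlt'
    rw [← hBc g' hg'] at this
    exact_mod_cast this
  rcases lt_or_gt_of_ne hABne with hlt | hlt
  · exact aux_sum P m A B n k hn2k hm hSA hSB hbound hbound' g hg hlt
  · exact aux_sum P m B A n k hn2k hm hSB hSA hbound' hbound g hg hlt
end

section
/- Let (R, pR) be a discrete valuation domain with valuation v and finite residue field, f = ∏_{g∈P} g^{m_g} ∈ R[x] primitive with v(d(f)) = n, and F = f/pⁿ. Suppose 0 ≠ k ∈ ℕ₀^P and ℓ ∈ ℕ₀ are such that H = (∏_{g∈P} g^{k_g})/p^ℓ divides F^j in Int(R) for some j ∈ ℕ. Then for every fixed divisor witness w ∈ W(f) (i.e., v(f(w)) = n), one has Σ_{g∈P} k_g · v(g(w)) = ℓ; equivalently, k − (ℓ/n)·m lies in the fixed divisor kernel fdk(f) = {x ∈ ℚ^P : Σ_g x_g v(g(w)) = 0 for all w ∈ W(f)}. -/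
open Polynomial IsDiscreteValuationRing

/-- The ring of integer-valued polynomials `Int(R)` as a subring of `K[x]`. -/
def intValued (R K : Type*) [CommRing R] [Field K] [Algebra R K] : Subring (Polynomial K) where
  carrier := {F | ∀ a : R, ∃ b : R, F.eval (algebraMap R K a) = algebraMap R K b}
  mul_mem' := by
    intro F G hF hG a
    obtain ⟨b, hb⟩ := hF a
    obtain ⟨c, hc⟩ := hG a
    exact ⟨b * c, by simp [hb, hc]⟩
  one_mem' := fun a => ⟨1, by simp⟩
  add_mem' := by
    intro F G hF hG a
    obtain ⟨b, hb⟩ := hF a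
    obtain ⟨c, hc⟩ := hG a
    exact ⟨b + c, by simp [hb, hc]⟩
  zero_mem' := fun a => ⟨0, by simp⟩
  neg_mem' := by
    intro F hF a
    obtain ⟨b, hb⟩ := hF a
    exact ⟨-b, by simp [hb]⟩

theorem stmt_8 (R K : Type*) [CommRing R] [IsDomain R] [IsDiscreteValuationRing R]
    [Field K] [Algebra R K] [IsFractionRing R K]
    [Finite (R ⧸ IsLocalRing.maximalIdeal R)]
    (p : R) (hp : Irreducible p)
    (P : Finset (Polynomial R)) (hPne : P.Nonempty)
    (hirr : ∀ g ∈ P, Irreducible g)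
    (hassoc : ∀ g ∈ P, ∀ h ∈ P, g ≠ h → ¬ Associated g h)
    (m : Polynomial R → ℕ) (hm : ∀ g ∈ P, 1 ≤ m g)
    (f : Polynomial R) (hf : f = ∏ g ∈ P, g ^ (m g))
    (hprim : f.IsPrimitive) (n : ℕ)
    (hge : ∀ a : R, (n : ℕ∞) ≤ addVal R (f.eval a))
    (hwit : ∃ a : R, addVal R (f.eval a) = n)
    (F : Polynomial K) (hF : F = (f.map (algebraMap R K)) * C (((algebraMap R K p) ^ n)⁻¹))
    (k : Polynomial R → ℕ) (hk : ∃ g ∈ P, k g ≠ 0) (ℓ : ℕ)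
    (H : Polynomial K)
    (hH : H = (∏ g ∈ P, (g.map (algebraMap R K)) ^ (k g)) * C (((algebraMap R K p) ^ ℓ)⁻¹))
    (hHmem : H ∈ intValued R K)
    (j : ℕ) (hj : 1 ≤ j)
    (hdvd : ∃ G ∈ intValued R K, F ^ j = H * G) :
    ∀ w : R, addVal R (f.eval w) = n →
      (∑ g ∈ P, (k g) • addVal R (g.eval w)) = (ℓ : ℕ∞) := by
  intro w hw
  obtain ⟨G, hGmem, hFG⟩ := hdvd
  obtain ⟨b, hb⟩ := hHmem w
  obtain ⟨c, hc⟩ := hGmem w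
  set φ := algebraMap R K with hφ
  have hinj : Function.Injective φ := IsFractionRing.injective R K
  have hp0 : p ≠ 0 := hp.ne_zero
  have hφp : φ p ≠ 0 := fun h => hp0 (hinj (by simpa using h))
  have hfw : f.eval w ≠ 0 := by
    intro h
    rw [h, addVal_zero] at hw
    exact (by simp : (⊤ : ℕ∞) ≠ (n : ℕ∞)) hw
  have hFeval : F.eval (φ w) = φ (f.eval w) * ((φ p) ^ n)⁻¹ := by
    rw [hF, eval_mul, eval_C, eval_map, Polynomial.eval₂_hom]
  have hHeval : H.eval (φ w) = φ (∏ g ∈ P, (g.eval w) ^ (k g)) * ((φ p) ^ ℓ)⁻¹ := by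
    rw [hH, eval_mul, eval_C, eval_prod, map_prod]
    congr 1
    exact Finset.prod_congr rfl fun g hg => by
      rw [eval_pow, eval_map, Polynomial.eval₂_hom, map_pow]
  -- key identity: f(w)^j = p^(n*j) * (b*c)
  have hkey : (f.eval w) ^ j = p ^ (n * j) * (b * c) := by
    apply hinj
    have h1 := congrArg (fun q : Polynomial K => q.eval (φ w)) hFG
    simp only [eval_pow, eval_mul] at h1
    rw [hFeval, hb, hc] at h1
    have h2 : (φ (f.eval w) * ((φ p) ^ n)⁻¹) ^ j * ((φ p) ^ n) ^ j
        = φ b * φ c * ((φ p) ^ n) ^ j := by rw [h1]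
    rw [mul_pow, inv_pow, mul_assoc, inv_mul_cancel₀ (pow_ne_zero _ (pow_ne_zero _ hφp)),
      mul_one] at h2
    push_cast [map_pow, map_mul]
    rw [h2, ← pow_mul]
    ring
  have hbc : b * c ≠ 0 := by
    intro h
    rw [h, mul_zero] at hkey
    exact pow_ne_zero j hfw hkey
  have hb0 : b ≠ 0 := fun h => hbc (by rw [h, zero_mul])
  have hc0 : c ≠ 0 := fun h => hbc (by rw [h, mul_zero])
  have hvb : addVal R b = 0 := by
    have hval := congrArg (addVal R) hkey
    rw [addVal_pow, addVal_mul, hp.addVal_pow, addVal_mul, hw] at hval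
    obtain ⟨B, hB⟩ := WithTop.ne_top_iff_exists.mp (mt addVal_eq_top_iff.mp hb0)
    obtain ⟨C, hC⟩ := WithTop.ne_top_iff_exists.mp (mt addVal_eq_top_iff.mp hc0)
    rw [← hB, ← hC, nsmul_eq_mul] at hval
    have h3 : ((j * n : ℕ) : ℕ∞) = ((n * j + (B + C) : ℕ) : ℕ∞) := by push_cast; exact hval
    have h4 : j * n = n * j + (B + C) := Nat.cast_injective h3
    rw [Nat.mul_comm n j] at h4
    have hB0 : B = 0 := by omega
    rw [← hB, hB0]
    rfl
  have hprod : (∏ g ∈ P, (g.eval w) ^ (k g)) = p ^ ℓ * b := by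
    apply hinj
    have h2 : φ (∏ g ∈ P, (g.eval w) ^ (k g)) * ((φ p) ^ ℓ)⁻¹ * (φ p) ^ ℓ
        = φ b * (φ p) ^ ℓ := by rw [← hHeval, hb]
    rw [mul_assoc, inv_mul_cancel₀ (pow_ne_zero _ hφp), mul_one] at h2
    rw [map_mul, map_pow, h2]
    ring
  have hval := congrArg (addVal R) hprod
  rw [addVal_mul, hp.addVal_pow, hvb, add_zero] at hval
  rw [← hval]
  have hsum : ∀ s : Finset (Polynomial R),
      addVal R (∏ g ∈ s, (g.eval w) ^ (k g)) = ∑ g ∈ s, k g • addVal R (g.eval w) := by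
    intro s
    induction s using Finset.cons_induction with
    | empty => simp [addVal_one]
    | cons a s ha ih => rw [Finset.prod_cons, Finset.sum_cons, addVal_mul, addVal_pow, ih]
  exact (hsum P).symm
end

section
/- (Adapted Siegel's lemma) Let r ∈ ℕ₀, s ∈ ℕ, and let I, J be finite sets with |I| = r, |J| = r + s. Let n ∈ ℕ and A = (a_{i,j}) ∈ ℕ₀^{I×J} be a matrix with nonnegative integer entries such that Σ_{j∈J} a_{i,j} ≤ n for every i ∈ I, and assume A contains u rows with exactly one non-zero entry. Then there exists 0 ≠ v ∈ ℤ^J with A v = 0 and ‖v‖_∞ ≤ ⌊n^{(r−u)/s}⌋. -/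
theorem stmt_12 (I J : Type*) [Fintype I] [Fintype J] [DecidableEq I]
    (r u : ℕ) (s : ℕ) (hs : 1 ≤ s)
    (hI : Fintype.card I = r) (hJ : Fintype.card J = r + s)
    (n : ℕ) (hn : 1 ≤ n) (A : I → J → ℕ)
    (hrow : ∀ i : I, (∑ j : J, A i j) ≤ n)
    (hu : u ≤ (Finset.univ.filter fun i : I =>
      (Finset.univ.filter fun j : J => A i j ≠ 0).card = 1).card) :
    ∃ v : J → ℤ, v ≠ 0 ∧ (∀ i : I, (∑ j : J, (A i j : ℤ) * v j) = 0) ∧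
      ∀ j : J, |v j| ≤ ⌊(n : ℝ) ^ (((r : ℝ) - (u : ℝ)) / (s : ℝ))⌋ := by
  classical
  set x : ℝ := (n : ℝ) ^ (((r : ℝ) - (u : ℝ)) / (s : ℝ)) with hxdef
  set P : Finset I := Finset.univ.filter fun i : I =>
      (Finset.univ.filter fun j : J => A i j ≠ 0).card = 1 with hPdef
  have hpr : P.card ≤ r := hI ▸ Finset.card_le_univ P
  have hur : u ≤ r := le_trans hu hpr
  have hx1 : (1:ℝ) ≤ x := by
    apply Real.one_le_rpow (by exact_mod_cast hn)
    apply div_nonneg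
    · have : (u:ℝ) ≤ (r:ℝ) := by exact_mod_cast hur
      linarith
    · positivity
  set B : ℤ := ⌊x⌋ with hBdef
  have hB1 : 1 ≤ B := by
    rw [hBdef, Int.le_floor]; simpa using hx1
  set Bn : ℕ := B.toNat with hBndef
  have hBnB : (Bn : ℤ) = B := Int.toNat_of_nonneg (by omega)
  have hBn1 : 1 ≤ Bn := by omega
  -- key power inequality
  have hkey : n ^ (r - u) < (Bn + 1) ^ s := by
    have h1 : x < (Bn:ℝ) + 1 := by
      have h := Int.lt_floor_add_one x
      rw [← hBdef] at h
      calc x < (B:ℝ) + 1 := h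
        _ = (Bn:ℝ) + 1 := by rw [← hBnB]; push_cast; ring
    have h2 : x ^ s < ((Bn:ℝ) + 1) ^ s :=
      pow_lt_pow_left₀ h1 (by linarith) (by omega)
    have hxs : x ^ s = (n:ℝ) ^ (r - u) := by
      rw [hxdef, ← Real.rpow_natCast ((n:ℝ) ^ (((r : ℝ) - (u : ℝ)) / (s : ℝ))) s,
        ← Real.rpow_mul (by positivity), div_mul_cancel₀]
      · rw [show (r:ℝ) - (u:ℝ) = ((r - u : ℕ) : ℝ) by
          rw [Nat.cast_sub hur], Real.rpow_natCast]
      · exact Nat.cast_ne_zero.2 (by omega)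
    rw [hxs] at h2
    exact_mod_cast h2
  set S : Finset J := P.biUnion (fun i => Finset.univ.filter fun j => A i j ≠ 0) with hSdef
  have hScard : S.card ≤ P.card := by
    calc S.card ≤ ∑ i ∈ P, (Finset.univ.filter fun j => A i j ≠ 0).card :=
          Finset.card_biUnion_le
      _ = ∑ i ∈ P, 1 := Finset.sum_congr rfl (fun i hi => by
          have := (Finset.mem_filter.1 (hPdef ▸ hi)).2
          simpa using this)
      _ = P.card := by simp
  set D : Finset (J → ℤ) := Fintype.piFinset
      (fun j => if j ∈ S then ({0}:Finset ℤ) else Finset.Icc 0 (Bn:ℤ)) with hDdef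
  set C : Finset (I → ℤ) := Fintype.piFinset
      (fun i => if i ∈ P then ({0}:Finset ℤ) else Finset.Icc 0 ((n*Bn : ℕ):ℤ)) with hCdef
  set Φ : (J → ℤ) → (I → ℤ) := fun v i => ∑ j, (A i j : ℤ) * v j with hΦdef
  have hDcard : D.card = (Bn + 1) ^ (Sᶜ.card) := by
    rw [hDdef, Fintype.card_piFinset]
    have h : ∀ j : J, (if j ∈ S then ({0}:Finset ℤ) else Finset.Icc 0 (Bn:ℤ)).card
        = if j ∈ Sᶜ then Bn + 1 else 1 := by
      intro j
      by_cases h : j ∈ S <;> simp [h, Int.card_Icc] <;> omega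
    rw [Finset.prod_congr rfl (fun j _ => h j), Finset.prod_ite_mem,
      Finset.univ_inter, Finset.prod_const]
  have hCcard : C.card = (n * Bn + 1) ^ (Pᶜ.card) := by
    rw [hCdef, Fintype.card_piFinset]
    have h : ∀ i : I, (if i ∈ P then ({0}:Finset ℤ) else Finset.Icc 0 ((n*Bn:ℕ):ℤ)).card
        = if i ∈ Pᶜ then n * Bn + 1 else 1 := by
      intro i
      by_cases h : i ∈ P <;> simp [h, Int.card_Icc] <;> omega
    rw [Finset.prod_congr rfl (fun i _ => h i), Finset.prod_ite_mem,
      Finset.univ_inter, Finset.prod_const]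
  have hPcc : Pᶜ.card = r - P.card := by rw [Finset.card_compl, hI]
  have hScc : Sᶜ.card = r + s - S.card := by rw [Finset.card_compl, hJ]
  have hlt : C.card < D.card := by
    rw [hDcard, hCcard]
    have h1 : (n * Bn + 1) ^ (Pᶜ.card) ≤ (n * (Bn + 1)) ^ (r - P.card) := by
      rw [hPcc]
      exact Nat.pow_le_pow_left (by nlinarith) _
    have h2 : (n * (Bn + 1)) ^ (r - P.card) = n ^ (r - P.card) * (Bn + 1) ^ (r - P.card) := by
      rw [mul_pow]
    have h3 : n ^ (r - P.card) ≤ n ^ (r - u) :=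
      Nat.pow_le_pow_right hn (by omega)
    have h4 : n ^ (r - u) * (Bn + 1) ^ (r - P.card) < (Bn + 1) ^ s * (Bn + 1) ^ (r - P.card) :=
      mul_lt_mul_of_pos_right hkey (by positivity : 0 < (Bn + 1) ^ (r - P.card))
    have h5 : (Bn + 1) ^ s * (Bn + 1) ^ (r - P.card) = (Bn + 1) ^ (s + (r - P.card)) := by
      rw [pow_add]
    have h6 : (Bn + 1) ^ (s + (r - P.card)) ≤ (Bn + 1) ^ (Sᶜ.card) :=
      Nat.pow_le_pow_right (by omega) (by omega)
    calc (n * Bn + 1) ^ (Pᶜ.card) ≤ n ^ (r - P.card) * (Bn + 1) ^ (r - P.card) := by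
          rw [← h2]; exact h1
      _ ≤ n ^ (r - u) * (Bn + 1) ^ (r - P.card) :=
          Nat.mul_le_mul_right _ h3
      _ < (Bn + 1) ^ (Sᶜ.card) := lt_of_lt_of_le (h5 ▸ h4) h6
  -- f ∈ D facts
  have hDbound : ∀ f ∈ D, ∀ j : J, 0 ≤ f j ∧ f j ≤ (Bn:ℤ) ∧ (j ∈ S → f j = 0) := by
    intro f hf j
    rw [hDdef, Fintype.mem_piFinset] at hf
    have := hf j
    by_cases hjS : j ∈ S
    · rw [if_pos hjS, Finset.mem_singleton] at this
      refine ⟨by omega, by omega, fun _ => this⟩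
    · rw [if_neg hjS, Finset.mem_Icc] at this
      exact ⟨this.1, this.2, fun h => absurd h hjS⟩
  have hmaps : ∀ f ∈ D, Φ f ∈ C := by
    intro f hf
    rw [hCdef, Fintype.mem_piFinset]
    intro i
    by_cases hiP : i ∈ P
    · rw [if_pos hiP, Finset.mem_singleton]
      apply Finset.sum_eq_zero
      intro j _
      by_cases hA : A i j = 0
      · simp [hA]
      · have hjS : j ∈ S := by
          rw [hSdef]; exact Finset.mem_biUnion.2 ⟨i, hiP, by simp [hA]⟩
        rw [(hDbound f hf j).2.2 hjS, mul_zero]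
    · rw [if_neg hiP, Finset.mem_Icc]
      constructor
      · exact Finset.sum_nonneg fun j _ => mul_nonneg (by positivity) (hDbound f hf j).1
      · calc ∑ j, (A i j:ℤ) * f j ≤ ∑ j, (A i j:ℤ) * (Bn:ℤ) :=
            Finset.sum_le_sum fun j _ =>
              mul_le_mul_of_nonneg_left (hDbound f hf j).2.1 (by positivity)
          _ = (∑ j, (A i j:ℤ)) * (Bn:ℤ) := by rw [← Finset.sum_mul]
          _ ≤ (n:ℤ) * (Bn:ℤ) := by
              apply mul_le_mul_of_nonneg_right _ (by positivity)
              exact_mod_cast hrow i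
          _ = ((n*Bn:ℕ):ℤ) := by push_cast; ring
  obtain ⟨f, hfD, g, hgD, hfg, hΦeq⟩ :=
    Finset.exists_ne_map_eq_of_card_lt_of_maps_to hlt hmaps
  refine ⟨fun j => f j - g j, ?_, ?_, ?_⟩
  · intro h
    apply hfg
    funext j
    have := congrFun h j
    simpa [sub_eq_zero] using this
  · intro i
    by_cases hiP : i ∈ P
    · apply Finset.sum_eq_zero
      intro j _
      by_cases hA : A i j = 0
      · simp [hA]
      · have hjS : j ∈ S := by
          rw [hSdef]; exact Finset.mem_biUnion.2 ⟨i, hiP, by simp [hA]⟩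
        have h1 := (hDbound f hfD j).2.2 hjS
        have h2 := (hDbound g hgD j).2.2 hjS
        simp [h1, h2]
    · have := congrFun hΦeq i
      simp only [hΦdef] at this
      simp only [mul_sub, Finset.sum_sub_distrib]
      rw [sub_eq_zero]
      exact this
  · intro j
    have hb1 := hDbound f hfD j
    have hb2 := hDbound g hgD j
    show |f j - g j| ≤ B
    rw [← hBnB, abs_le]
    omega
end

section
/- Let r ∈ ℕ₀, s ∈ ℕ, n ∈ ℕ, and A ∈ ℕ₀^{r×(r+s)} with all row sums at most n. Set b = ⌊n^{r/s}⌋. Then there exist two distinct vectors x, y ∈ {0,1,…,b}^{r+s} with A x = A y; consequently v = x − y is a non-zero integer kernel vector of A with ‖v‖_∞ ≤ b. -/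
theorem stmt_13 (r : ℕ) (s : ℕ) (hs : 1 ≤ s) (n : ℕ) (hn : 1 ≤ n)
    (A : Fin r → Fin (r + s) → ℕ)
    (hrow : ∀ i, (∑ j, A i j) ≤ n)
    (b : ℤ) (hb : b = ⌊(n : ℝ) ^ ((r : ℝ) / (s : ℝ))⌋) :
    ∃ x y : Fin (r + s) → ℕ, x ≠ y ∧
      (∀ j, (x j : ℤ) ≤ b) ∧ (∀ j, (y j : ℤ) ≤ b) ∧
      (∀ i, (∑ j, A i j * x j) = ∑ j, A i j * y j) ∧
      ∃ v : Fin (r + s) → ℤ, v = (fun j => (x j : ℤ) - (y j : ℤ)) ∧ v ≠ 0 ∧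
        (∀ i, (∑ j, (A i j : ℤ) * v j) = 0) ∧ ∀ j, |v j| ≤ b := by
  have hb1 : (1 : ℤ) ≤ b := by
    rw [hb]
    refine Int.le_floor.mpr ?_
    push_cast
    exact Real.one_le_rpow (by exact_mod_cast hn) (by positivity)
  set B := b.toNat with hBdef
  have hBb : (B : ℤ) = b := Int.toNat_of_nonneg (by linarith)
  -- key inequality n^r < (B+1)^s
  have hkey : n ^ r < (B + 1) ^ s := by
    have h1 : (n : ℝ) ^ ((r : ℝ) / (s : ℝ)) < (B : ℝ) + 1 := by
      have hB : ((B : ℕ) : ℝ) = (b : ℝ) := by exact_mod_cast hBb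
      have hfl := Int.lt_floor_add_one ((n : ℝ) ^ ((r : ℝ) / (s : ℝ)))
      rw [← hb] at hfl
      rw [hB]; exact hfl
    have hs0 : (s : ℝ) ≠ 0 := by positivity
    have h2 : (n : ℝ) ^ r < ((B : ℝ) + 1) ^ s := by
      have heq : (n : ℝ) ^ r = ((n : ℝ) ^ ((r : ℝ) / (s : ℝ))) ^ s := by
        rw [← Real.rpow_natCast ((n : ℝ) ^ ((r : ℝ) / (s : ℝ))) s,
          ← Real.rpow_mul (by positivity), div_mul_cancel₀ _ hs0, Real.rpow_natCast]
      rw [heq]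
      exact pow_lt_pow_left₀ h1 (by positivity) (by omega)
    exact_mod_cast h2
  -- cardinality inequality
  have hcard : (n * B + 1) ^ r < (B + 1) ^ (r + s) := by
    calc (n * B + 1) ^ r ≤ (n * (B + 1)) ^ r := by
          apply Nat.pow_le_pow_left; nlinarith
      _ = n ^ r * (B + 1) ^ r := mul_pow n (B + 1) r
      _ < (B + 1) ^ s * (B + 1) ^ r := by
          apply Nat.mul_lt_mul_right (pow_pos (by omega) r) |>.mpr hkey
      _ = (B + 1) ^ (r + s) := by rw [← pow_add, add_comm s r]
  -- pigeonhole map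
  have hFbound : ∀ (f : Fin (r + s) → Fin (B + 1)) (i : Fin r),
      (∑ j, A i j * (f j : ℕ)) < n * B + 1 := by
    intro f i
    have : (∑ j, A i j * (f j : ℕ)) ≤ ∑ j, A i j * B := by
      apply Finset.sum_le_sum
      intro j _
      exact Nat.mul_le_mul_left _ (Fin.is_le _)
    rw [← Finset.sum_mul] at this
    have := this.trans (Nat.mul_le_mul_right B (hrow i))
    omega
  let F : (Fin (r + s) → Fin (B + 1)) → (Fin r → Fin (n * B + 1)) :=
    fun f i => ⟨∑ j, A i j * (f j : ℕ), hFbound f i⟩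
  have hcard' : Fintype.card (Fin r → Fin (n * B + 1)) <
      Fintype.card (Fin (r + s) → Fin (B + 1)) := by
    simpa [Fintype.card_fun] using hcard
  obtain ⟨f, g, hfg, heq⟩ := Fintype.exists_ne_map_eq_of_card_lt F hcard'
  refine ⟨fun j => (f j : ℕ), fun j => (g j : ℕ), ?_, ?_, ?_, ?_, ?_⟩
  · intro h
    apply hfg
    funext j
    exact Fin.ext (congrFun h j)
  · intro j
    rw [← hBb]; exact_mod_cast Fin.is_le (f j)
  · intro j
    rw [← hBb]; exact_mod_cast Fin.is_le (g j)
  · intro i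
    exact congrArg Fin.val (congrFun heq i)
  · refine ⟨_, rfl, ?_, ?_, ?_⟩
    · intro h0
      apply hfg
      funext j
      have := congrFun h0 j
      simp only [Pi.zero_apply, sub_eq_zero] at this
      exact Fin.ext (by exact_mod_cast this)
    · intro i
      have h := congrArg Fin.val (congrFun heq i)
      simp only [F] at h
      have : (∑ j, (A i j : ℤ) * (f j : ℕ)) = ∑ j, (A i j : ℤ) * (g j : ℕ) := by
        exact_mod_cast h
      simp only [mul_sub, Finset.sum_sub_distrib]
      rw [this]; ring
    · intro j
      have hf : ((f j : ℕ) : ℤ) ≤ b := by rw [← hBb]; exact_mod_cast Fin.is_le (f j)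
      have hg : ((g j : ℕ) : ℤ) ≤ b := by rw [← hBb]; exact_mod_cast Fin.is_le (g j)
      have hf0 : (0 : ℤ) ≤ ((f j : ℕ) : ℤ) := Int.natCast_nonneg _
      have hg0 : (0 : ℤ) ≤ ((g j : ℕ) : ℤ) := Int.natCast_nonneg _
      rw [abs_le]; constructor <;> linarith
end

section
/- Let A be the r × (r+1) matrix over ℚ with A_{i,i} = 1 and A_{i,i+1} = n−1 for 1 ≤ i ≤ r−1, A_{r,r+1} = n, and all other entries zero, where n ≥ 2, r ≥ 2. Then ker(A) is one-dimensional, spanned by the vector v with v_i = (−1)^{r−i}(n−1)^{r−i} for 1 ≤ i ≤ r and v_{r+1} = 0, and ker(A) ∩ ℤ^{r+1} = ℤ·v. Consequently min{‖w⁺‖_∞ + ‖w⁻‖_∞ : 0 ≠ w ∈ ker(A) ∩ ℤ^{r+1}} = (n−1)^{r−1} + (n−1)^{r−2}. -/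
set_option maxHeartbeats 1000000


theorem stmt_15 (r n : ℕ) (hr : 2 ≤ r) (hn : 2 ≤ n)
    (A : Fin r → Fin (r + 1) → ℚ)
    (hA : ∀ i j, A i j =
      if (i : ℕ) < r - 1 then
        (if (j : ℕ) = (i : ℕ) then 1
         else if (j : ℕ) = (i : ℕ) + 1 then (n : ℚ) - 1 else 0)
      else (if (j : ℕ) = r then (n : ℚ) else 0))
    (v : Fin (r + 1) → ℚ)
    (hv : ∀ j, v j = if (j : ℕ) = r then 0
      else (-1) ^ (r - 1 - (j : ℕ)) * ((n : ℚ) - 1) ^ (r - 1 - (j : ℕ)))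
    (vZ : Fin (r + 1) → ℤ)
    (hvZ : ∀ j, vZ j = if (j : ℕ) = r then 0
      else (-1) ^ (r - 1 - (j : ℕ)) * ((n : ℤ) - 1) ^ (r - 1 - (j : ℕ))) :
    (∀ w : Fin (r + 1) → ℚ,
      (∀ i, (∑ j, A i j * w j) = 0) ↔ ∃ c : ℚ, w = c • v) ∧
    (∀ w : Fin (r + 1) → ℤ,
      (∀ i, (∑ j, A i j * (w j : ℚ)) = 0) ↔ ∃ c : ℤ, w = c • vZ) ∧
    IsLeast {t : ℕ | ∃ w : Fin (r + 1) → ℤ, w ≠ 0 ∧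
        (∀ i, (∑ j, A i j * (w j : ℚ)) = 0) ∧
        t = (Finset.univ.sup fun j => (max (w j) 0).toNat) +
            (Finset.univ.sup fun j => (max (-(w j)) 0).toNat)}
      ((n - 1) ^ (r - 1) + (n - 1) ^ (r - 2)) := by
  have rowsum : ∀ (w : Fin (r+1) → ℚ) (i : Fin r),
      (∑ j, A i j * w j) =
        if h : (i:ℕ) < r - 1 then
          w ⟨i, by omega⟩ + ((n:ℚ)-1) * w ⟨(i:ℕ)+1, by omega⟩
        else (n:ℚ) * w ⟨r, by omega⟩ := by
    intro w i
    by_cases h : (i:ℕ) < r - 1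
    · rw [dif_pos h]
      set a : Fin (r+1) := ⟨i, by omega⟩ with ha
      set b : Fin (r+1) := ⟨(i:ℕ)+1, by omega⟩ with hb
      have key : ∀ j, A i j * w j =
          (if j = a then w a else 0) + (if j = b then ((n:ℚ)-1) * w b else 0) := by
        intro j
        rw [hA, if_pos h]
        rcases eq_or_ne j a with rfl | hja
        · have h1 : ((a:ℕ) = (i:ℕ)) := rfl
          have h2 : a ≠ b := by simp [ha, hb, Fin.ext_iff]
          simp [h1, h2]
        · have h1 : (j:ℕ) ≠ (i:ℕ) := fun hh => hja (Fin.ext hh)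
          rcases eq_or_ne j b with rfl | hjb
          · have h2 : ((b:ℕ) = (i:ℕ)+1) := rfl
            simp [h1, h2, hja]
          · have h2 : (j:ℕ) ≠ (i:ℕ)+1 := fun hh => hjb (Fin.ext hh)
            simp [h1, h2, hja, hjb]
      rw [Finset.sum_congr rfl (fun j _ => key j), Finset.sum_add_distrib]
      simp
    · rw [dif_neg h]
      set a : Fin (r+1) := ⟨r, by omega⟩ with ha
      have key : ∀ j, A i j * w j = (if j = a then (n:ℚ) * w a else 0) := by
        intro j
        rw [hA, if_neg h]
        rcases eq_or_ne j a with rfl | hja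
        · simp [ha]
        · have h1 : (j:ℕ) ≠ r := fun hh => hja (Fin.ext hh)
          simp [h1, hja]
      rw [Finset.sum_congr rfl (fun j _ => key j)]
      simp
  have eqs_iff : ∀ (w : Fin (r+1) → ℚ),
      (∀ i, (∑ j, A i j * w j) = 0) ↔
        ((∀ k, (hk : k < r - 1) → w ⟨k, by omega⟩ + ((n:ℚ)-1) * w ⟨k+1, by omega⟩ = 0) ∧
          w ⟨r, by omega⟩ = 0) := by
    intro w
    constructor
    · intro hw
      refine ⟨fun k hk => ?_, ?_⟩
      · have := hw ⟨k, by omega⟩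
        rwa [rowsum, dif_pos hk] at this
      · have := hw ⟨r-1, by omega⟩
        rw [rowsum, dif_neg (by simp)] at this
        have hn0 : (n:ℚ) ≠ 0 := Nat.cast_ne_zero.mpr (by omega)
        exact (mul_eq_zero.mp this).resolve_left hn0
    · rintro ⟨h1, h2⟩ i
      rw [rowsum]
      by_cases h : (i:ℕ) < r-1
      · rw [dif_pos h]; exact h1 i h
      · rw [dif_neg h, h2, mul_zero]
  -- value of v at indices below r
  have hvlt : ∀ (j : Fin (r+1)), (j:ℕ) < r → v j = (-((n:ℚ)-1)) ^ (r - 1 - (j:ℕ)) := by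
    intro j hj
    rw [hv, if_neg (by omega), ← neg_pow]
  have hvlast : v ⟨r, by omega⟩ = 0 := by
    rw [hv, if_pos rfl]
  have hvr1 : v ⟨r-1, by omega⟩ = 1 := by
    rw [hvlt ⟨r-1, by omega⟩ (show r - 1 < r by omega)]
    norm_num [Nat.sub_self]
  -- backward: c • v satisfies equations
  have bwd : ∀ c : ℚ, ∀ i, (∑ j, A i j * (c • v) j) = 0 := by
    intro c
    rw [eqs_iff]
    refine ⟨fun k hk => ?_, ?_⟩
    · have e1 : v ⟨k, by omega⟩ = (-((n:ℚ)-1)) ^ (r - 1 - k) := hvlt _ (show k < r by omega)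
      have e2 : v ⟨k+1, by omega⟩ = (-((n:ℚ)-1)) ^ (r - 1 - (k+1)) := hvlt _ (show k + 1 < r by omega)
      have e3 : r - 1 - k = (r - 1 - (k+1)) + 1 := by omega
      simp only [Pi.smul_apply, smul_eq_mul, e1, e2, e3, pow_succ]
      ring
    · simp [hv]
  -- forward: solutions are multiples of v
  have fwd : ∀ (w : Fin (r+1) → ℚ), (∀ i, (∑ j, A i j * w j) = 0) →
      w = (w ⟨r-1, by omega⟩) • v := by
    intro w hw
    rw [eqs_iff] at hw
    obtain ⟨h1, h2⟩ := hw
    have step : ∀ d, d ≤ r - 1 → w ⟨r-1-d, by omega⟩ = (-((n:ℚ)-1))^d * w ⟨r-1, by omega⟩ := by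
      intro d
      induction d with
      | zero => intro _; norm_num
      | succ d ih =>
        intro hd
        have hk : r - 1 - (d+1) < r - 1 := by omega
        have := h1 (r-1-(d+1)) hk
        have hidx : (⟨r-1-(d+1)+1, by omega⟩ : Fin (r+1)) = ⟨r-1-d, by omega⟩ := by
          apply Fin.ext; simp; omega
        rw [hidx] at this
        rw [ih (by omega)] at this
        have : w ⟨r-1-(d+1), by omega⟩ = -(((n:ℚ)-1)) * ((-((n:ℚ)-1))^d * w ⟨r-1, by omega⟩) := by
          linarith
        rw [this, pow_succ]
        ring
    funext j
    by_cases hj : (j:ℕ) < r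
    · have hd : r - 1 - (r - 1 - (j:ℕ)) = (j:ℕ) := by omega
      have hidx : (⟨r-1-(r-1-(j:ℕ)), by omega⟩ : Fin (r+1)) = j := by
        apply Fin.ext; simp [hd]
      have := step (r-1-(j:ℕ)) (by omega)
      rw [hidx] at this
      rw [this]
      simp only [Pi.smul_apply, smul_eq_mul, hvlt j hj]
      ring
    · have hjr : (j:ℕ) = r := by omega
      have hidx : (⟨r, by omega⟩ : Fin (r+1)) = j := by apply Fin.ext; simp [hjr]
      rw [← hidx, h2]
      simp [hv]
  have part1 : ∀ w : Fin (r + 1) → ℚ,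
      (∀ i, (∑ j, A i j * w j) = 0) ↔ ∃ c : ℚ, w = c • v := by
    intro w
    constructor
    · intro hw; exact ⟨_, fwd w hw⟩
    · rintro ⟨c, rfl⟩; exact bwd c
  have hvZcast : ∀ j, ((vZ j : ℚ)) = v j := by
    intro j
    rw [hvZ, hv]
    split
    · simp
    · push_cast; ring
  have part2 : ∀ w : Fin (r + 1) → ℤ,
      (∀ i, (∑ j, A i j * (w j : ℚ)) = 0) ↔ ∃ c : ℤ, w = c • vZ := by
    intro w
    constructor
    · intro hw
      refine ⟨w ⟨r-1, by omega⟩, ?_⟩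
      have h := fwd (fun j => (w j : ℚ)) hw
      funext j
      have h1 := congrFun h j
      simp only [Pi.smul_apply, smul_eq_mul] at h1
      have h2 : ((w j : ℚ)) = (((w ⟨r-1, by omega⟩ : ℤ) * vZ j : ℤ) : ℚ) := by
        push_cast
        rw [h1, hvZcast]
      have h3 : w j = (w ⟨r-1, by omega⟩ : ℤ) * vZ j := by exact_mod_cast h2
      simpa [Pi.smul_apply, smul_eq_mul] using h3
    · rintro ⟨c, rfl⟩ i
      calc ∑ j, A i j * (((c • vZ) j : ℤ) : ℚ)
          = ∑ j, A i j * (((c:ℚ) • v) j) := by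
            refine Finset.sum_congr rfl fun j _ => ?_
            congr 1
            simp only [Pi.smul_apply, smul_eq_mul]
            push_cast
            rw [hvZcast]
        _ = 0 := bwd (c:ℚ) i
  -- ℤ-side helpers
  have hvZlt : ∀ (j : Fin (r+1)), (j:ℕ) < r → vZ j = (-((n:ℤ)-1)) ^ (r - 1 - (j:ℕ)) := by
    intro j hj
    rw [hvZ, if_neg (by omega), ← neg_pow]
  have hn1 : (1:ℤ) ≤ (n:ℤ) - 1 := by
    have : (2:ℤ) ≤ (n:ℤ) := by exact_mod_cast hn
    omega
  have hzpow : ∀ k, (1:ℤ) ≤ ((n:ℤ)-1) ^ k := fun k => one_le_pow₀ hn1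
  have hcast : ∀ k : ℕ, (((n - 1 : ℕ) ^ k : ℕ) : ℤ) = ((n:ℤ)-1) ^ k := by
    intro k
    rw [Nat.cast_pow, Nat.cast_sub (by omega), Nat.cast_one]
  have htoNat : ∀ k : ℕ, (((n:ℤ)-1) ^ k).toNat = (n-1:ℕ)^k := by
    intro k; rw [← hcast, Int.toNat_natCast]
  have key : ∀ (x : ℤ) (k : ℕ), ((n:ℤ)-1)^k ≤ x → (n-1:ℕ)^k ≤ (max x 0).toNat := by
    intro x k h
    have h2 : ((n:ℤ)-1)^k ≤ max x 0 := le_trans h (le_max_left _ _)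
    have h3 := Int.toNat_le_toNat h2
    rwa [htoNat] at h3
  have habs : ∀ (j : Fin (r+1)), (j:ℕ) < r →
      vZ j = ((n:ℤ)-1) ^ (r-1-(j:ℕ)) ∨ vZ j = -(((n:ℤ)-1) ^ (r-1-(j:ℕ))) := by
    intro j hj
    rw [hvZlt j hj]
    rcases Nat.even_or_odd (r-1-(j:ℕ)) with he | ho
    · exact Or.inl (he.neg_pow _)
    · exact Or.inr (ho.neg_pow _)
  have hvZr1 : vZ ⟨r-1, by omega⟩ = 1 := by
    rw [hvZlt _ (show r - 1 < r by omega)]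
    simp
  have f0 : vZ ⟨0, by omega⟩ = (-((n:ℤ)-1))^(r-2) * (-((n:ℤ)-1)) := by
    rw [hvZlt _ (show 0 < r by omega)]
    have he : r - 1 - ((⟨0, by omega⟩ : Fin (r+1)) : ℕ) = r - 2 + 1 := by
      show r - 1 - 0 = r - 2 + 1; omega
    rw [he, pow_succ]
  have f1 : vZ ⟨1, by omega⟩ = (-((n:ℤ)-1))^(r-2) := by
    rw [hvZlt _ (show 1 < r by omega)]
    have he : r - 1 - ((⟨1, by omega⟩ : Fin (r+1)) : ℕ) = r - 2 := by
      show r - 1 - 1 = r - 2; omega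
    rw [he]
  -- lower bound lemma
  have lb : ∀ (c : ℤ), c ≠ 0 →
      (n-1)^(r-1) + (n-1)^(r-2) ≤
        (Finset.univ.sup fun j => (max ((c • vZ) j) 0).toNat) +
        (Finset.univ.sup fun j => (max (-((c • vZ) j)) 0).toNat) := by
    intro c hc
    have e1' : (c • vZ) ⟨1, by omega⟩ = c * (-((n:ℤ)-1))^(r-2) := by
      rw [Pi.smul_apply, smul_eq_mul, f1]
    have e0' : -((c • vZ) ⟨0, by omega⟩) = (c * (-((n:ℤ)-1))^(r-2)) * ((n:ℤ)-1) := by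
      rw [Pi.smul_apply, smul_eq_mul, f0]
      ring
    have hdabs : ((n:ℤ)-1)^(r-2) ≤ |c * (-((n:ℤ)-1))^(r-2)| := by
      rw [abs_mul, abs_pow, abs_neg, abs_of_nonneg (by omega : (0:ℤ) ≤ (n:ℤ)-1)]
      calc ((n:ℤ)-1)^(r-2) = 1 * ((n:ℤ)-1)^(r-2) := (one_mul _).symm
        _ ≤ |c| * ((n:ℤ)-1)^(r-2) := by
            apply mul_le_mul_of_nonneg_right (Int.one_le_abs hc)
            positivity
    have hdne : c * (-((n:ℤ)-1))^(r-2) ≠ 0 :=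
      mul_ne_zero hc (pow_ne_zero _ (by omega : -((n:ℤ)-1) ≠ 0))
    have hpow21 : ((n:ℤ)-1)^(r-2) * ((n:ℤ)-1) = ((n:ℤ)-1)^(r-1) := by
      rw [← pow_succ]
      congr 1
      omega
    rcases hdne.lt_or_gt with hneg | hpos
    · -- d < 0 : positive part comes from index 0, negative from index 1
      have hd1 : ((n:ℤ)-1)^(r-2) ≤ -(c * (-((n:ℤ)-1))^(r-2)) := by
        rw [abs_of_neg hneg] at hdabs; exact hdabs
      have hP : (n-1:ℕ)^(r-1) ≤ Finset.univ.sup fun j => (max ((c • vZ) j) 0).toNat := by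
        refine le_trans ?_ (Finset.le_sup (Finset.mem_univ (⟨0, by omega⟩ : Fin (r+1))))
        show (n-1:ℕ)^(r-1) ≤ (max ((c • vZ) ⟨0, by omega⟩) 0).toNat
        have hval : ((n:ℤ)-1)^(r-1) ≤ (c • vZ) ⟨0, by omega⟩ := by
          have : (c • vZ) ⟨0, by omega⟩ = (-(c * (-((n:ℤ)-1))^(r-2))) * ((n:ℤ)-1) := by
            rw [← neg_eq_iff_eq_neg.mpr e0'.symm]; ring
          rw [this, ← hpow21]
          exact mul_le_mul_of_nonneg_right hd1 (by omega)
        exact key _ _ hval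
      have hN : (n-1:ℕ)^(r-2) ≤ Finset.univ.sup fun j => (max (-((c • vZ) j)) 0).toNat := by
        refine le_trans ?_ (Finset.le_sup (Finset.mem_univ (⟨1, by omega⟩ : Fin (r+1))))
        show (n-1:ℕ)^(r-2) ≤ (max (-((c • vZ) ⟨1, by omega⟩)) 0).toNat
        have hval : ((n:ℤ)-1)^(r-2) ≤ -((c • vZ) ⟨1, by omega⟩) := by
          rw [e1']; exact hd1
        exact key _ _ hval
      omega
    · -- d > 0 : positive part from index 1, negative from index 0
      have hd1 : ((n:ℤ)-1)^(r-2) ≤ c * (-((n:ℤ)-1))^(r-2) := by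
        rw [abs_of_pos hpos] at hdabs; exact hdabs
      have hP : (n-1:ℕ)^(r-2) ≤ Finset.univ.sup fun j => (max ((c • vZ) j) 0).toNat := by
        refine le_trans ?_ (Finset.le_sup (Finset.mem_univ (⟨1, by omega⟩ : Fin (r+1))))
        show (n-1:ℕ)^(r-2) ≤ (max ((c • vZ) ⟨1, by omega⟩) 0).toNat
        have hval : ((n:ℤ)-1)^(r-2) ≤ (c • vZ) ⟨1, by omega⟩ := by
          rw [e1']; exact hd1
        exact key _ _ hval
      have hN : (n-1:ℕ)^(r-1) ≤ Finset.univ.sup fun j => (max (-((c • vZ) j)) 0).toNat := by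
        refine le_trans ?_ (Finset.le_sup (Finset.mem_univ (⟨0, by omega⟩ : Fin (r+1))))
        show (n-1:ℕ)^(r-1) ≤ (max (-((c • vZ) ⟨0, by omega⟩)) 0).toNat
        have hval : ((n:ℤ)-1)^(r-1) ≤ -((c • vZ) ⟨0, by omega⟩) := by
          rw [e0', ← hpow21]
          exact mul_le_mul_of_nonneg_right hd1 (by omega)
        exact key _ _ hval
      omega
  -- uniform bounds on vZ entries
  have hPb : ∀ j : Fin (r+1), (max (vZ j) 0).toNat ≤ (n-1)^(r-1) := by
    intro j
    have hle : max (vZ j) 0 ≤ ((n:ℤ)-1)^(r-1) := by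
      by_cases hj : (j:ℕ) < r
      · have hpp : ((n:ℤ)-1)^(r-1-(j:ℕ)) ≤ ((n:ℤ)-1)^(r-1) :=
          pow_le_pow_right₀ hn1 (by omega)
        rcases habs j hj with h | h <;> rw [h]
        · exact max_le hpp (by positivity)
        · refine max_le (le_trans ?_ hpp) (by positivity)
          have := hzpow (r-1-(j:ℕ)); omega
      · rw [hvZ, if_pos (by omega)]
        simp
        positivity
    have h3 := Int.toNat_le_toNat hle
    rwa [htoNat] at h3
  have hNb : ∀ j : Fin (r+1), (max (-(vZ j)) 0).toNat ≤ (n-1)^(r-1) := by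
    intro j
    have hle : max (-(vZ j)) 0 ≤ ((n:ℤ)-1)^(r-1) := by
      by_cases hj : (j:ℕ) < r
      · have hpp : ((n:ℤ)-1)^(r-1-(j:ℕ)) ≤ ((n:ℤ)-1)^(r-1) :=
          pow_le_pow_right₀ hn1 (by omega)
        rcases habs j hj with h | h <;> rw [h]
        · refine max_le ?_ (by positivity)
          have := hzpow (r-1-(j:ℕ)); omega
        · refine max_le (by simpa using hpp) (by positivity)
      · rw [hvZ, if_pos (by omega)]
        simp
        positivity
    have h3 := Int.toNat_le_toNat hle
    rwa [htoNat] at h3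
  -- upper bound for vZ itself
  have ub : (Finset.univ.sup fun j => (max (vZ j) 0).toNat) +
      (Finset.univ.sup fun j => (max (-(vZ j)) 0).toNat) ≤ (n-1)^(r-1) + (n-1)^(r-2) := by
    obtain ⟨j₀, -, hj₀⟩ := Finset.exists_mem_eq_sup Finset.univ Finset.univ_nonempty
      (fun j => (max (vZ j) 0).toNat)
    obtain ⟨j₁, -, hj₁⟩ := Finset.exists_mem_eq_sup Finset.univ Finset.univ_nonempty
      (fun j => (max (-(vZ j)) 0).toNat)
    rw [hj₀, hj₁]
    by_cases h₀ : 0 < vZ j₀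
    · by_cases h₁ : vZ j₁ < 0
      · -- both nonzero: distinct indices
        have hj0r : (j₀:ℕ) < r := by
          by_contra hcon
          rw [hvZ, if_pos (by omega)] at h₀; omega
        have hj1r : (j₁:ℕ) < r := by
          by_contra hcon
          rw [hvZ, if_pos (by omega)] at h₁; omega
        have hv0 : vZ j₀ = ((n:ℤ)-1)^(r-1-(j₀:ℕ)) := by
          rcases habs j₀ hj0r with h | h
          · exact h
          · exfalso; rw [h] at h₀; have := hzpow (r-1-(j₀:ℕ)); omega
        have hv1 : vZ j₁ = -(((n:ℤ)-1)^(r-1-(j₁:ℕ))) := by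
          rcases habs j₁ hj1r with h | h
          · exfalso; rw [h] at h₁; have := hzpow (r-1-(j₁:ℕ)); omega
          · exact h
        have hjne : (j₀:ℕ) ≠ (j₁:ℕ) := by
          intro hh
          have : vZ j₀ = vZ j₁ := by rw [Fin.ext hh]
          omega
        have t0 : (max (vZ j₀) 0).toNat = (n-1)^(r-1-(j₀:ℕ)) := by
          rw [max_eq_left h₀.le, hv0, htoNat]
        have t1 : (max (-(vZ j₁)) 0).toNat = (n-1)^(r-1-(j₁:ℕ)) := by
          rw [max_eq_left (by omega), show -(vZ j₁) = ((n:ℤ)-1)^(r-1-(j₁:ℕ)) from by omega, htoNat]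
        rw [t0, t1]
        have hb : 1 ≤ n - 1 := by omega
        rcases Nat.lt_or_ge (r-1-(j₀:ℕ)) (r-1-(j₁:ℕ)) with hlt | hge
        · have g1 := Nat.pow_le_pow_right hb (show r-1-(j₀:ℕ) ≤ r-2 by omega)
          have g2 := Nat.pow_le_pow_right hb (show r-1-(j₁:ℕ) ≤ r-1 by omega)
          omega
        · have hlt' : r-1-(j₁:ℕ) < r-1-(j₀:ℕ) := by omega
          have g1 := Nat.pow_le_pow_right hb (show r-1-(j₁:ℕ) ≤ r-2 by omega)
          have g2 := Nat.pow_le_pow_right hb (show r-1-(j₀:ℕ) ≤ r-1 by omega)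
          omega
      · have t1 : (max (-(vZ j₁)) 0).toNat = 0 := by
          rw [max_eq_right (by omega)]
          rfl
        rw [t1]
        have := hPb j₀
        omega
    · have t0 : (max (vZ j₀) 0).toNat = 0 := by
        rw [max_eq_right (by omega)]
        rfl
      rw [t0]
      have := hNb j₁
      omega
  -- assemble
  refine ⟨part1, part2, ?_, ?_⟩
  · refine ⟨vZ, ?_, (part2 vZ).mpr ⟨1, (one_smul _ _).symm⟩, ?_⟩
    · intro h
      have h1 := congrFun h ⟨r-1, by omega⟩
      rw [hvZr1] at h1
      simp at h1
    · refine le_antisymm ?_ ?_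
      · have := lb 1 one_ne_zero
        simpa using this
      · exact ub
  · rintro t ⟨w, hw0, hweq, rfl⟩
    obtain ⟨c, rfl⟩ := (part2 w).mp hweq
    have hc : c ≠ 0 := by rintro rfl; simp at hw0
    exact lb c hc
end

section
/- Let (R, pR) be a discrete valuation domain with finite residue field and valuation v, and let F = f/p ∈ Int(R) with f ∈ R[x] primitive and fixed divisor d(f) = pR. Suppose f = g·h in R[x] with h non-constant irreducible such that v(f(a)) ≥ 2 for every a ∈ R with v(h(a)) ≥ 1. Then F² = (g²h/p²)·h is a factorization of F² in Int(R); in particular g²h/p² ∈ Int(R). -/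
open Polynomial IsDiscreteValuationRing

theorem stmt_18 (R K : Type*) [CommRing R] [IsDomain R] [IsDiscreteValuationRing R]
    [Field K] [Algebra R K] [IsFractionRing R K]
    [Finite (R ⧸ IsLocalRing.maximalIdeal R)]
    (p : R) (hp : Irreducible p)
    (f g h : Polynomial R) (hprim : f.IsPrimitive)
    (hfgh : f = g * h) (hhdeg : 0 < h.natDegree) (hhirr : Irreducible h)
    (hfix1 : ∀ a : R, p ∣ f.eval a) (hfix2 : ∃ a : R, ¬ p ^ 2 ∣ f.eval a)
    (hroots : ∀ a : R, p ∣ h.eval a → p ^ 2 ∣ f.eval a) :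
    (∀ a : R, p ^ 2 ∣ (g ^ 2 * h).eval a) ∧
    ((g ^ 2 * h).map (algebraMap R K) * C (((algebraMap R K p) ^ 2)⁻¹) ∈ intValued R K) ∧
    (f.map (algebraMap R K) * C ((algebraMap R K p)⁻¹)) ^ 2 =
      ((g ^ 2 * h).map (algebraMap R K) * C (((algebraMap R K p) ^ 2)⁻¹)) *
        (h.map (algebraMap R K)) := by
  have key : ∀ a : R, p ^ 2 ∣ (g ^ 2 * h).eval a := by
    intro a
    by_cases hc : p ∣ h.eval a
    · have h2 : p ^ 2 ∣ f.eval a := hroots a hc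
      have : (g ^ 2 * h).eval a = g.eval a * f.eval a := by
        simp [hfgh]; ring
      rw [this]
      exact Dvd.dvd.mul_left h2 _
    · have h1 : p ∣ g.eval a * h.eval a := by
        have := hfix1 a
        rwa [hfgh, eval_mul] at this
      have hpg : p ∣ g.eval a := (hp.prime.dvd_mul.mp h1).resolve_right hc
      have : p ^ 2 ∣ (g.eval a) ^ 2 := pow_dvd_pow_of_dvd hpg 2
      simpa [mul_comm, mul_assoc, pow_two] using this.mul_right (h.eval a)
  refine ⟨key, ?_, ?_⟩
  · intro a
    obtain ⟨b, hb⟩ := key a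
    refine ⟨b, ?_⟩
    have hp0 : algebraMap R K p ≠ 0 := by
      simpa using (IsFractionRing.to_map_eq_zero_iff (K := K)).not.mpr hp.ne_zero
    have he : ((g ^ 2 * h).map (algebraMap R K)).eval (algebraMap R K a)
        = algebraMap R K ((g ^ 2 * h).eval a) := by
      rw [eval_map, eval₂_at_apply]
    simp only [eval_mul, he, eval_C, hb, map_mul, map_pow]
    field_simp
  · have hf : f.map (algebraMap R K) = g.map (algebraMap R K) * h.map (algebraMap R K) := by
      rw [hfgh, Polynomial.map_mul]
    rw [hf, Polynomial.map_mul, Polynomial.map_pow]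
    rw [← inv_pow, C_pow]
    ring
end

section
/- Let (R, pR) be a discrete valuation domain with finite residue field, P a nonempty finite set of pairwise non-associated irreducible non-constant polynomials in R[x], m ∈ ℕ^P, n ∈ ℕ₀, and F = (∏_{g∈P} g^{m_g})/pⁿ ∈ Int(R) with fixed divisor of the numerator equal to pⁿ. If F = F₁ ⋯ F_r is a factorization of F into non-units of Int(R), then each F_j is associated in Int(R) to a polynomial of the form (∏_{g∈P} g^{m_{j,g}})/p^{k_j} with m_{j,g} ∈ ℕ₀, k_j ∈ ℕ₀, Σ_j k_j = n, and Σ_j m_{j,g} = m_g for every g ∈ P. -/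
open Polynomial IsDiscreteValuationRing

open Polynomial IsDiscreteValuationRing UniqueFactorizationMonoid

lemma aux_nf_prod {α : Type*} [CommMonoidWithZero α] [NormalizationMonoid α]
    [UniqueFactorizationMonoid α] [DecidableEq α] [Nontrivial α] {ι : Type*} (s : Finset ι) (h : ι → α)
    (hh : ∀ i ∈ s, h i ≠ 0) :
    normalizedFactors (∏ i ∈ s, h i) = ∑ i ∈ s, normalizedFactors (h i) := by
  induction s using Finset.cons_induction with
  | empty => simp
  | cons a t ha ih =>
    rw [Finset.prod_cons, Finset.sum_cons,
      normalizedFactors_mul (hh a (Finset.mem_cons_self _ _))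
        (Finset.prod_ne_zero_iff.2 fun i hi => hh i (Finset.mem_cons_of_mem hi)),
      ih fun i hi => hh i (Finset.mem_cons_of_mem hi)]

lemma aux_multiset_prod {α β : Type*} [DecidableEq α] [DecidableEq β] [CommMonoid α] (P : Finset β) (f : β → α)
    (hinj : ∀ g ∈ P, ∀ h ∈ P, f g = f h → g = h) :
    ∀ (s : Multiset α), (∀ a ∈ s, ∃ g ∈ P, a = f g) →
      s.prod = ∏ g ∈ P, f g ^ s.count (f g) := by
  intro s
  induction s using Multiset.induction with
  | empty => intro _; simp
  | cons a s ih =>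
    intro hmem
    obtain ⟨g₀, hg₀, rfl⟩ := hmem a (Multiset.mem_cons_self a s)
    rw [Multiset.prod_cons, ih fun b hb => hmem b (Multiset.mem_cons_of_mem hb)]
    have hcount : ∀ g ∈ P, (Multiset.count (f g) (f g₀ ::ₘ s)) =
        Multiset.count (f g) s + if g = g₀ then 1 else 0 := by
      intro g hg
      rcases eq_or_ne g g₀ with rfl | hne
      · simp [Multiset.count_cons_self]
      · rw [Multiset.count_cons_of_ne (fun h => hne (hinj g hg g₀ hg₀ h)), if_neg hne, add_zero]
    have hone : (∏ g ∈ P, f g ^ if g = g₀ then 1 else 0) = f g₀ := by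
      rw [Finset.prod_eq_single g₀ (fun b _ hb => by rw [if_neg hb, pow_zero])
        (fun h => absurd hg₀ h)]
      rw [if_pos rfl, pow_one]
    have key : (∏ g ∈ P, f g ^ Multiset.count (f g) (f g₀ ::ₘ s))
        = (∏ g ∈ P, f g ^ Multiset.count (f g) s) *
          ∏ g ∈ P, f g ^ if g = g₀ then 1 else 0 := by
      rw [← Finset.prod_mul_distrib]
      exact Finset.prod_congr rfl fun g hg => by rw [hcount g hg, pow_add]
    rw [key, hone, mul_comm]

lemma aux_count {α β : Type*} [DecidableEq α] [DecidableEq β] (P : Finset β) (f : β → α) (m : β → ℕ)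
    (hinj : ∀ g ∈ P, ∀ h ∈ P, f g = f h → g = h) {g₀ : β} (hg₀ : g₀ ∈ P) :
    Multiset.count (f g₀) (∑ g ∈ P, m g • ({f g} : Multiset α)) = m g₀ := by
  rw [Multiset.count_sum', Finset.sum_eq_single g₀]
  · simp [Multiset.count_nsmul, Multiset.count_singleton]
  · intro b hb hne
    rw [Multiset.count_nsmul, Multiset.count_singleton,
      if_neg (fun h => hne (hinj g₀ hg₀ b hb h).symm), mul_zero]
  · exact fun h => absurd hg₀ h

lemma aux_addVal_prod {R : Type*} [CommRing R] [IsDomain R] [IsDiscreteValuationRing R]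
    {ι : Type*} (s : Finset ι) (h : ι → R) :
    addVal R (∏ i ∈ s, h i) = ∑ i ∈ s, addVal R (h i) := by
  induction s using Finset.cons_induction with
  | empty => simp [addVal_one]
  | cons a t ha ih => rw [Finset.prod_cons, Finset.sum_cons, addVal_mul, ih]

lemma aux_unit_of_addVal {R : Type*} [CommRing R] [IsDomain R] [IsDiscreteValuationRing R]
    {p : R} (hp : Irreducible p) {d : R} {k : ℕ} (h : addVal R d = k) :
    ∃ w : Rˣ, d = (w : R) * p ^ k := by
  have hdvd : p ^ k ∣ d := by
    rw [← addVal_le_iff_dvd, hp.addVal_pow, h]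
  obtain ⟨s, rfl⟩ := hdvd
  have h2 : addVal R s = 0 := by
    rw [addVal_mul, hp.addVal_pow] at h
    have := WithTop.add_left_cancel (x := (k : ℕ∞)) WithTop.coe_ne_top
      (h.trans (by rw [add_zero]) : (k : ℕ∞) + addVal R s = (k : ℕ∞) + 0)
    exact this
  have hu : IsUnit s := by
    apply isUnit_of_dvd_one
    rw [← addVal_le_iff_dvd, addVal_one, h2]
  obtain ⟨w, rfl⟩ := hu
  exact ⟨w, mul_comm _ _⟩

theorem stmt_19 (R K : Type*) [CommRing R] [IsDomain R] [IsDiscreteValuationRing R]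
    [Field K] [Algebra R K] [IsFractionRing R K]
    [Finite (R ⧸ IsLocalRing.maximalIdeal R)]
    (p : R) (hp : Irreducible p)
    (P : Finset (Polynomial R)) (hPne : P.Nonempty)
    (hirr : ∀ g ∈ P, Irreducible g) (hdeg : ∀ g ∈ P, 0 < g.natDegree)
    (hassoc : ∀ g ∈ P, ∀ h ∈ P, g ≠ h → ¬ Associated g h)
    (m : Polynomial R → ℕ) (hm : ∀ g ∈ P, 1 ≤ m g)
    (f : Polynomial R) (hf : f = ∏ g ∈ P, g ^ (m g)) (n : ℕ)
    (hge : ∀ a : R, (n : ℕ∞) ≤ addVal R (f.eval a))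
    (hwit : ∃ a : R, addVal R (f.eval a) = n)
    (F : Polynomial K) (hF : F = (f.map (algebraMap R K)) * C (((algebraMap R K p) ^ n)⁻¹))
    (hmem : F ∈ intValued R K)
    (t : ℕ) (Fs : Fin t → intValued R K)
    (hnonunit : ∀ j, ¬ IsUnit (Fs j))
    (hprod : (∏ j, Fs j) = (⟨F, hmem⟩ : intValued R K)) :
    ∃ (mj : Fin t → Polynomial R → ℕ) (kj : Fin t → ℕ),
      (∑ j, kj j) = n ∧
      (∀ g ∈ P, (∑ j, mj j g) = m g) ∧
      ∀ j : Fin t,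
        ∃ hmemj : ((∏ g ∈ P, (g.map (algebraMap R K)) ^ (mj j g)) *
            C (((algebraMap R K p) ^ (kj j))⁻¹)) ∈ intValued R K,
          Associated (Fs j)
            (⟨(∏ g ∈ P, (g.map (algebraMap R K)) ^ (mj j g)) *
              C (((algebraMap R K p) ^ (kj j))⁻¹), hmemj⟩ : intValued R K) := by
  classical
  letI : NormalizationMonoid R := (UniqueFactorizationMonoid.normalizationMonoid (α := R)).toNormalizationMonoid
  letI : NormalizedGCDMonoid R := UniqueFactorizationMonoid.toNormalizedGCDMonoid R
  set κ := algebraMap R K with hκdef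
  have hκinj : Function.Injective κ := IsFractionRing.injective R K
  have hp0 : κ p ≠ 0 := fun h => hp.ne_zero (hκinj (by simpa using h))
  have hprim : ∀ g ∈ P, g.IsPrimitive := by
    intro g hg r hr
    obtain ⟨q, hq⟩ := hr
    rcases (hirr g hg).isUnit_or_isUnit hq with h | h
    · exact Polynomial.isUnit_C.mp h
    · exfalso
      obtain ⟨r', hr', hCr⟩ := Polynomial.isUnit_iff.mp h
      have hdg : g.natDegree = 0 := by
        rw [hq, ← hCr, ← Polynomial.C_mul, Polynomial.natDegree_C]
      exact (hdeg g hg).ne' hdg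
  have hirrK : ∀ g ∈ P, Irreducible (g.map κ) :=
    fun g hg => ((hprim g hg).irreducible_iff_irreducible_map_fraction_map).mp (hirr g hg)
  have hninj : ∀ g ∈ P, ∀ h ∈ P, normalize (g.map κ) = normalize (h.map κ) → g = h := by
    intro g hg h hh heq
    by_contra hne
    apply hassoc g hg h hh hne
    obtain ⟨h1, h2⟩ := normalize_eq_normalize_iff.mp heq
    exact associated_of_dvd_dvd
      ((hprim g hg).dvd_of_fraction_map_dvd_fraction_map (K := K) h1)
      ((hprim h hh).dvd_of_fraction_map_dvd_fraction_map (K := K) h2)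
  have hf0 : f ≠ 0 := by
    rw [hf]
    exact Finset.prod_ne_zero_iff.2 fun g hg => pow_ne_zero _ (hirr g hg).ne_zero
  have hfmap : f.map κ = ∏ g ∈ P, (g.map κ) ^ m g := by
    rw [hf, Polynomial.map_prod]
    simp [Polynomial.map_pow]
  have hfmap0 : f.map κ ≠ 0 := by
    rwa [Ne, Polynomial.map_eq_zero_iff hκinj]
  have hCunit : IsUnit (C (((κ p) ^ n)⁻¹) : Polynomial K) :=
    Polynomial.isUnit_C.mpr (isUnit_iff_ne_zero.mpr (inv_ne_zero (pow_ne_zero _ hp0)))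
  have hF0 : F ≠ 0 := by
    rw [hF]
    exact mul_ne_zero hfmap0 hCunit.ne_zero
  have hFsprod : (∏ j, ((Fs j : Polynomial K))) = F := by
    have := congrArg (Subtype.val) hprod
    simpa using this
  have hFj0 : ∀ j, (Fs j : Polynomial K) ≠ 0 := by
    intro j hj
    exact hF0 (by rw [← hFsprod]; exact Finset.prod_eq_zero (Finset.mem_univ j) hj)
  have hNF_F : UniqueFactorizationMonoid.normalizedFactors F =
      ∑ g ∈ P, m g • {normalize (g.map κ)} := by
    have h1 : Associated (f.map κ) F := by
      rw [hF]; exact associated_mul_unit_right _ _ hCunit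
    rw [← h1.normalizedFactors_eq, hfmap,
      aux_nf_prod _ _ (fun g hg => pow_ne_zero _ (hirrK g hg).ne_zero)]
    refine Finset.sum_congr rfl fun g hg => ?_
    rw [UniqueFactorizationMonoid.normalizedFactors_pow,
      UniqueFactorizationMonoid.normalizedFactors_irreducible (hirrK g hg)]
  have hNF_sum : (∑ j, UniqueFactorizationMonoid.normalizedFactors ((Fs j : Polynomial K)))
      = UniqueFactorizationMonoid.normalizedFactors F := by
    rw [← hFsprod, aux_nf_prod _ _ (fun j _ => hFj0 j)]
  set cnt : Fin t → Polynomial R → ℕ := fun j g =>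
    Multiset.count (normalize (g.map κ))
      (UniqueFactorizationMonoid.normalizedFactors ((Fs j : Polynomial K))) with hcntdef
  have hsum_cnt : ∀ g ∈ P, (∑ j, cnt j g) = m g := by
    intro g hg
    rw [hcntdef, ← Multiset.count_sum', hNF_sum, hNF_F]
    exact aux_count P _ m hninj hg
  have hmemNF : ∀ j, ∀ a ∈ UniqueFactorizationMonoid.normalizedFactors ((Fs j : Polynomial K)),
      ∃ g ∈ P, a = normalize (g.map κ) := by
    intro j a ha
    have haF : a ∈ UniqueFactorizationMonoid.normalizedFactors F := by
      rw [← hNF_sum]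
      exact Multiset.mem_sum.mpr ⟨j, Finset.mem_univ j, ha⟩
    rw [hNF_F] at haF
    obtain ⟨g, hg, hmem'⟩ := Multiset.mem_sum.mp haF
    exact ⟨g, hg, Multiset.mem_singleton.mp (Multiset.mem_nsmul.mp hmem').2⟩
  have hdecomp : ∀ j, ∃ c : K, c ≠ 0 ∧
      (Fs j : Polynomial K) = C c * ∏ g ∈ P, (g.map κ) ^ (cnt j g) := by
    intro j
    have h1 : Associated
        ((UniqueFactorizationMonoid.normalizedFactors ((Fs j : Polynomial K))).prod)
        ((Fs j : Polynomial K)) := UniqueFactorizationMonoid.prod_normalizedFactors (hFj0 j)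
    have h2 : (UniqueFactorizationMonoid.normalizedFactors ((Fs j : Polynomial K))).prod =
        normalize (∏ g ∈ P, (g.map κ) ^ (cnt j g)) := by
      rw [aux_multiset_prod P (fun g => normalize (g.map κ)) hninj _ (hmemNF j)]
      rw [← coe_normalizeHom, map_prod]
      exact Finset.prod_congr rfl fun g hg => by rw [map_pow]; rfl
    have h4 : Associated (∏ g ∈ P, (g.map κ) ^ (cnt j g)) ((Fs j : Polynomial K)) :=
      (associated_normalize _).trans (h2 ▸ h1)
    obtain ⟨u, hu⟩ := h4
    obtain ⟨cu, hcu, hC⟩ := Polynomial.isUnit_iff.mp u.isUnit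
    exact ⟨cu, hcu.ne_zero, by rw [← hu, ← hC, mul_comm]⟩
  choose c hc0 hcdec using hdecomp
  obtain ⟨a₀, ha₀⟩ := hwit
  set fj : Fin t → Polynomial R := fun j => ∏ g ∈ P, g ^ (cnt j g) with hfjdef
  have hfjmap : ∀ j, (fj j).map κ = ∏ g ∈ P, (g.map κ) ^ (cnt j g) := by
    intro j
    rw [hfjdef, Polynomial.map_prod]
    exact Finset.prod_congr rfl fun g hg => by rw [Polynomial.map_pow]
  have hprod_fj : (∏ j, fj j) = f := by
    rw [hf, hfjdef]
    rw [Finset.prod_comm]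
    exact Finset.prod_congr rfl fun g hg => by
      rw [Finset.prod_pow_eq_pow_sum, hsum_cnt g hg]
  have hcprod : (∏ j, c j) = ((κ p) ^ n)⁻¹ := by
    have h1 : (C (∏ j, c j) * f.map κ : Polynomial K) = C (((κ p) ^ n)⁻¹) * f.map κ := by
      calc C (∏ j, c j) * f.map κ
          = ∏ j, (C (c j) * (fj j).map κ) := by
            rw [Finset.prod_mul_distrib, ← map_prod, ← Polynomial.map_prod, hprod_fj]
        _ = ∏ j, (Fs j : Polynomial K) := by
            refine Finset.prod_congr rfl fun j _ => ?_
            rw [hcdec j, hfjmap j]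
        _ = F := hFsprod
        _ = C (((κ p) ^ n)⁻¹) * f.map κ := by rw [hF, mul_comm]
    exact Polynomial.C_inj.mp (mul_right_cancel₀ hfmap0 h1)
  have hfa0 : f.eval a₀ ≠ 0 := by
    intro h
    rw [h, addVal_zero] at ha₀
    exact (WithTop.coe_ne_top (a := n)) ha₀.symm
  set d : Fin t → R := fun j => (fj j).eval a₀ with hddef
  have hdprod : (∏ j, d j) = f.eval a₀ := by
    rw [hddef, ← Polynomial.eval_prod, hprod_fj]
  have hd0 : ∀ j, d j ≠ 0 := fun j h =>
    hfa0 (by rw [← hdprod]; exact Finset.prod_eq_zero (Finset.mem_univ j) h)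
  have hvfin : ∀ j, ∃ k : ℕ, addVal R (d j) = (k : ℕ∞) := by
    intro j
    have : addVal R (d j) ≠ ⊤ := by
      rw [Ne, addVal_eq_top_iff]
      exact hd0 j
    obtain ⟨k, hk⟩ := WithTop.ne_top_iff_exists.mp this
    exact ⟨k, hk.symm⟩
  choose kj hkj using hvfin
  have hksum : (∑ j, kj j) = n := by
    have h1 : ((∑ j, kj j : ℕ) : ℕ∞) = (n : ℕ∞) := by
      rw [Nat.cast_sum, ← ha₀, ← hdprod, aux_addVal_prod]
      exact Finset.sum_congr rfl fun j _ => (hkj j).symm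
    exact_mod_cast h1
  have hwj : ∀ j, ∃ w : Rˣ, d j = (w : R) * p ^ (kj j) :=
    fun j => aux_unit_of_addVal hp (hkj j)
  choose w hw using hwj
  have hb : ∀ j, ∃ b : R, (Fs j : Polynomial K).eval (κ a₀) = κ b := fun j => (Fs j).2 a₀
  choose b hbspec using hb
  have hevalFj : ∀ j, (Fs j : Polynomial K).eval (κ a₀) = c j * κ (d j) := by
    intro j
    rw [hcdec j, ← hfjmap j, Polynomial.eval_mul, Polynomial.eval_C, Polynomial.eval_map,
      Polynomial.eval₂_at_apply]
  have hcform : ∀ j, c j * (κ p) ^ (kj j) = κ (b j * ((w j)⁻¹ : Rˣ)) := by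
    intro j
    have hdj : κ (d j) = κ (w j : R) * (κ p) ^ (kj j) := by
      rw [hw j, map_mul, map_pow]
    have hbj : κ (b j) = c j * (κ (w j : R) * (κ p) ^ (kj j)) := by
      rw [← hdj, ← hevalFj j, hbspec j]
    have hwu : κ (w j : R) * κ (((w j)⁻¹ : Rˣ) : R) = 1 := by
      rw [← map_mul, Units.mul_inv, map_one]
    rw [map_mul, hbj]
    calc c j * (κ p) ^ (kj j)
        = c j * (κ (w j : R) * (κ p) ^ (kj j)) * κ (((w j)⁻¹ : Rˣ) : R) := by
          rw [mul_assoc (c j), mul_assoc, mul_comm ((κ p) ^ (kj j)), ← mul_assoc (κ (w j : R)),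
            hwu, one_mul]
      _ = _ := rfl
  have hbu : ∀ j, IsUnit (b j) := by
    have h1 : (∏ j, (b j * (((w j)⁻¹ : Rˣ) : R))) = 1 := by
      apply hκinj
      rw [map_prod, map_one]
      calc (∏ j, κ (b j * (((w j)⁻¹ : Rˣ) : R)))
          = ∏ j, (c j * (κ p) ^ (kj j)) := Finset.prod_congr rfl fun j _ => (hcform j).symm
        _ = (∏ j, c j) * (κ p) ^ (∑ j, kj j) := by
            rw [Finset.prod_mul_distrib, Finset.prod_pow_eq_pow_sum]
        _ = 1 := by rw [hcprod, hksum, inv_mul_cancel₀ (pow_ne_zero _ hp0)]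
    intro j
    refine isUnit_of_dvd_unit ?_ (h1 ▸ isUnit_one)
    exact dvd_trans (dvd_mul_right _ _) (Finset.dvd_prod_of_mem _ (Finset.mem_univ j))
  have hpk0 : ∀ j, ((κ p) ^ (kj j)) ≠ 0 := fun j => pow_ne_zero _ hp0
  refine ⟨cnt, kj, hksum, hsum_cnt, fun j => ?_⟩
  obtain ⟨ub, hub⟩ := hbu j
  set u : Rˣ := ub * (w j)⁻¹ with hudef
  have hE : κ (u : R) = κ (b j * (((w j)⁻¹ : Rˣ) : R)) := by
    rw [hudef, Units.val_mul, hub, map_mul]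
  have hu0 : κ (u : R) ≠ 0 := fun h => Units.ne_zero u (hκinj (by simpa using h))
  have hcfinal : c j = κ (u : R) * ((κ p) ^ (kj j))⁻¹ := by
    rw [hE, ← hcform j, mul_assoc, mul_inv_cancel₀ (hpk0 j), mul_one]
  have hGeq : ((∏ g ∈ P, (g.map κ) ^ (cnt j g)) * C (((κ p) ^ (kj j))⁻¹) : Polynomial K)
      = (Fs j : Polynomial K) * C (κ ((u⁻¹ : Rˣ) : R)) := by
    have huinv : κ ((u⁻¹ : Rˣ) : R) = (κ (u : R))⁻¹ := by
      refine eq_inv_of_mul_eq_one_left ?_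
      rw [← map_mul, Units.inv_mul, map_one]
    rw [hcdec j, hcfinal, huinv]
    rw [Polynomial.C_mul]
    have expand : (C (κ (u : R)) * C (((κ p) ^ (kj j))⁻¹) * ∏ g ∈ P, (g.map κ) ^ (cnt j g))
        * C ((κ (u : R))⁻¹)
        = (C (κ (u : R)) * C ((κ (u : R))⁻¹)) *
          ((∏ g ∈ P, (g.map κ) ^ (cnt j g)) * C (((κ p) ^ (kj j))⁻¹)) := by ring
    rw [expand, ← Polynomial.C_mul, mul_inv_cancel₀ hu0, Polynomial.C_1, one_mul]
  have hCmem : ∀ r : R, (C (κ r) : Polynomial K) ∈ intValued R K := by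
    intro r a
    exact ⟨r, by simp [hκdef]⟩
  have hmemG : ((∏ g ∈ P, (g.map κ) ^ (cnt j g)) * C (((κ p) ^ (kj j))⁻¹) : Polynomial K)
      ∈ intValued R K := by
    rw [hGeq]
    exact Subring.mul_mem _ (Fs j).2 (hCmem _)
  refine ⟨hmemG, ?_⟩
  refine ⟨⟨⟨C (κ ((u⁻¹ : Rˣ) : R)), hCmem _⟩, ⟨C (κ (u : R)), hCmem _⟩, ?_, ?_⟩, ?_⟩
  · refine Subtype.ext ?_
    show (C (κ ((u⁻¹ : Rˣ) : R)) * C (κ (u : R)) : Polynomial K) = 1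
    rw [← Polynomial.C_mul, ← map_mul, Units.inv_mul, map_one, Polynomial.C_1]
  · refine Subtype.ext ?_
    show (C (κ (u : R)) * C (κ ((u⁻¹ : Rˣ) : R)) : Polynomial K) = 1
    rw [← Polynomial.C_mul, ← map_mul, Units.mul_inv, map_one, Polynomial.C_1]
  · exact Subtype.ext hGeq.symm
end
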